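/- arXiv:1602.03416 — 5 statements merged into one kernel-verified Lean document; each statement's English description precedes it below -/
import Mathlib

section
/- Let α̂ = -1 + sqrt(24α+1), β̂ = -1 + sqrt(24β+1), γ̂ = -1 + sqrt(24γ+1) for α,β,γ ≥ 0. Then the three conditions (i) α,β,γ ≥ 5/8, (ii) α ≤ ξ̃(β,γ), β ≤ ξ̃(α,γ), γ ≤ ξ̃(α,β), and (iii) ξ(α,β,γ) ≥ 2 hold simultaneously if and only if min(α̂, β̂, γ̂) ≥ 3 and α̂ + β̂ + γ̂ ≥ max(10, 2α̂, 2β̂, 2γ̂). -/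
/-- Half-plane Brownian intersection exponent. -/
noncomputable def xit (x y : ℝ) : ℝ :=
  ((Real.sqrt (24*x+1) + Real.sqrt (24*y+1) - 1)^2 - 1) / 24

/-- Whole-plane Brownian intersection exponent. -/
noncomputable def xi (x y z : ℝ) : ℝ :=
  ((Real.sqrt (24*x+1) + Real.sqrt (24*y+1) + Real.sqrt (24*z+1) - 3)^2 - 4) / 48

/-- α̂ = -1 + sqrt(24α+1). -/
noncomputable def hat (x : ℝ) : ℝ := -1 + Real.sqrt (24*x+1)

private lemma aux1 {x A : ℝ} (hA2 : A^2 = 24*x+1) (hA1 : 0 ≤ A) :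
    5/8 ≤ x ↔ 4 ≤ A := by
  constructor
  · intro h; nlinarith
  · intro h; nlinarith

private lemma aux2 {x A s : ℝ} (hA2 : A^2 = 24*x+1) (hA1 : 0 ≤ A) (hs : 0 ≤ s) :
    x ≤ (s^2 - 1)/24 ↔ A ≤ s := by
  constructor
  · intro h; nlinarith
  · intro h; nlinarith

private lemma aux3 {t : ℝ} (ht : 0 ≤ t) : 2 ≤ (t^2 - 4)/48 ↔ 10 ≤ t := by
  constructor
  · intro h; nlinarith
  · intro h; nlinarith

theorem trichordal_conditions_iff_hat (α β γ : ℝ)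
    (hα : 0 ≤ α) (hβ : 0 ≤ β) (hγ : 0 ≤ γ) :
    ((5/8 ≤ α ∧ 5/8 ≤ β ∧ 5/8 ≤ γ) ∧
     (α ≤ xit β γ ∧ β ≤ xit α γ ∧ γ ≤ xit α β) ∧
     2 ≤ xi α β γ) ↔
    (3 ≤ min (hat α) (min (hat β) (hat γ)) ∧
     max 10 (max (2 * hat α) (max (2 * hat β) (2 * hat γ)))
       ≤ hat α + hat β + hat γ) := by
  simp only [xit, xi, hat, le_min_iff, max_le_iff]
  set A := Real.sqrt (24*α+1) with hA
  set B := Real.sqrt (24*β+1) with hB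
  set C := Real.sqrt (24*γ+1) with hC
  have hA2 : A^2 = 24*α+1 := Real.sq_sqrt (by linarith)
  have hB2 : B^2 = 24*β+1 := Real.sq_sqrt (by linarith)
  have hC2 : C^2 = 24*γ+1 := Real.sq_sqrt (by linarith)
  have hA1 : 1 ≤ A := by nlinarith [Real.sqrt_nonneg (24*α+1)]
  have hB1 : 1 ≤ B := by nlinarith [Real.sqrt_nonneg (24*β+1)]
  have hC1 : 1 ≤ C := by nlinarith [Real.sqrt_nonneg (24*γ+1)]
  have e1 : 5/8 ≤ α ↔ 4 ≤ A := aux1 hA2 (by linarith)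
  have e2 : 5/8 ≤ β ↔ 4 ≤ B := aux1 hB2 (by linarith)
  have e3 : 5/8 ≤ γ ↔ 4 ≤ C := aux1 hC2 (by linarith)
  have f1 : α ≤ ((B + C - 1)^2 - 1)/24 ↔ A ≤ B + C - 1 :=
    aux2 hA2 (by linarith) (by linarith)
  have f2 : β ≤ ((A + C - 1)^2 - 1)/24 ↔ B ≤ A + C - 1 :=
    aux2 hB2 (by linarith) (by linarith)
  have f3 : γ ≤ ((A + B - 1)^2 - 1)/24 ↔ C ≤ A + B - 1 :=
    aux2 hC2 (by linarith) (by linarith)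
  have g : 2 ≤ ((A + B + C - 3)^2 - 4)/48 ↔ 10 ≤ A + B + C - 3 :=
    aux3 (by linarith)
  rw [e1, e2, e3, f1, f2, f3, g]
  constructor
  · rintro ⟨⟨h1, h2, h3⟩, ⟨h4, h5, h6⟩, h7⟩
    exact ⟨⟨by linarith, by linarith, by linarith⟩, by linarith, by linarith,
      by linarith, by linarith⟩
  · rintro ⟨⟨h1, h2, h3⟩, h4, h5, h6, h7⟩
    exact ⟨⟨by linarith, by linarith, by linarith⟩, ⟨by linarith, by linarith,
      by linarith⟩, by linarith⟩
end

section
/- Fix x ∈ ℝ \ {-1, 0}. The solution of the linear ODE y'(t) = -a_x(t)·y(t)/(v(t) - b_x(t))² with y(0) = 1, where a_x(t) = exp(-2t/(x²+x)), b_x(t) = (2x+1)exp(-t/(x²+x)) - x - 1, and v(t) = x·exp(-t/(x²+x)) - x - 1, is y(t) = exp(-t/(x+1)²). -/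
theorem loewner_derivative_ode_solution (x : ℝ) (hx1 : x ≠ -1) (hx0 : x ≠ 0)
    (y : ℝ → ℝ) (h0 : y 0 = 1)
    (hy : ∀ t : ℝ, 0 ≤ t →
      HasDerivAt y
        (-(Real.exp (-2*t/(x^2+x))) * y t /
          ((x * Real.exp (-t/(x^2+x)) - x - 1)
            - ((2*x+1) * Real.exp (-t/(x^2+x)) - x - 1))^2) t) :
    ∀ t : ℝ, 0 ≤ t → y t = Real.exp (-t/(x+1)^2) := by
  have hx1' : x + 1 ≠ 0 := by intro h; apply hx1; linarith
  set c : ℝ := (x+1)^2 with hc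
  have hc0 : c ≠ 0 := pow_ne_zero _ hx1'
  have key : ∀ s : ℝ, 0 ≤ s → HasDerivAt y (-(y s)/c) s := by
    intro s hs
    have h := hy s hs
    have hE := Real.exp_ne_zero (-s/(x^2+x))
    convert h using 1
    have hexp2 : Real.exp (-2*s/(x^2+x)) = Real.exp (-s/(x^2+x)) ^ 2 := by
      rw [show -2*s/(x^2+x) = -s/(x^2+x) + -s/(x^2+x) from by ring, Real.exp_add]; ring
    have hden : ((x * Real.exp (-s/(x^2+x)) - x - 1)
        - ((2*x+1) * Real.exp (-s/(x^2+x)) - x - 1)) = -(x+1) * Real.exp (-s/(x^2+x)) := by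
      ring
    rw [hexp2, hden, mul_pow, neg_sq, hc]
    field_simp
  set g : ℝ → ℝ := fun s => y s * Real.exp (s/c) with hg
  have hg' : ∀ s : ℝ, 0 ≤ s → HasDerivAt g 0 s := by
    intro s hs
    have h1 : HasDerivAt (fun s : ℝ => Real.exp (s/c)) (Real.exp (s/c) * (1/c)) s := by
      have := (Real.hasDerivAt_exp (s/c)).comp s ((hasDerivAt_id s).div_const c)
      exact this
    have h2 := (key s hs).mul h1
    have h3 : (-(y s)/c) * Real.exp (s/c) + y s * (Real.exp (s/c) * (1/c)) = 0 := by
      field_simp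
      ring
    rw [h3] at h2
    exact h2
  intro t ht
  have hgt : g t = g 0 := by
    rcases eq_or_lt_of_le ht with h | h
    · rw [← h]
    · have hdiff : DifferentiableOn ℝ g (Set.Icc 0 t) := fun s hs =>
        (hg' s hs.1).differentiableAt.differentiableWithinAt
      have hderiv : ∀ s ∈ Set.Ico 0 t, derivWithin g (Set.Icc 0 t) s = 0 := by
        intro s hs
        exact ((hg' s hs.1).hasDerivWithinAt).derivWithin
          (uniqueDiffOn_Icc h s (Set.mem_Icc_of_Ico hs))
      exact constant_of_derivWithin_zero hdiff hderiv t (Set.mem_Icc.mpr ⟨ht, le_refl t⟩)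
  have h1 : y t * Real.exp (t/c) = 1 := by
    have := hgt
    simp only [hg, h0, zero_div, Real.exp_zero, mul_one] at this
    exact this
  have hy' : y t = (Real.exp (t/c))⁻¹ := by
    have hne := Real.exp_ne_zero (t/c)
    calc y t = y t * Real.exp (t/c) * (Real.exp (t/c))⁻¹ := by field_simp
    _ = (Real.exp (t/c))⁻¹ := by rw [h1, one_mul]
  rw [show -t/(x+1)^2 = -(t/c) from by rw [hc]; ring, Real.exp_neg]
  exact hy'
end

section
/- Let a, b', c be reals with a ≥ b' > 0 and c > 0, and let u : [0,1) → ℝ be a C² solution of Euler's hypergeometric equation z(1-z)u''(z) + (c - (a + b' + 1)z)u'(z) - a·b'·u(z) = 0 with u(0) = 1 and u'(0) = a·b'/c. Then u is strictly increasing on (0,1); in particular u(z) > 0 for all z ∈ [0,1). -/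
open Set Filter Topology

theorem euler_hypergeometric_strictMono (a b c : ℝ)
    (hab : b ≤ a) (hb : 0 < b) (hc : 0 < c)
    (u u' u'' : ℝ → ℝ)
    (hu : ∀ z ∈ Set.Ico (0:ℝ) 1, HasDerivWithinAt u (u' z) (Set.Ico 0 1) z)
    (hu' : ∀ z ∈ Set.Ico (0:ℝ) 1, HasDerivWithinAt u' (u'' z) (Set.Ico 0 1) z)
    (hu'' : ContinuousOn u'' (Set.Ico 0 1))
    (hode : ∀ z ∈ Set.Ico (0:ℝ) 1,
      z*(1-z)*u'' z + (c - (a+b+1)*z)*u' z - a*b*u z = 0)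
    (h0 : u 0 = 1) (h0' : u' 0 = a*b/c) :
    StrictMonoOn u (Set.Ioo 0 1) ∧ ∀ z ∈ Set.Ico (0:ℝ) 1, 0 < u z := by
  have ha : 0 < a := lt_of_lt_of_le hb hab
  have hu'cont : ContinuousOn u' (Set.Ico 0 1) := fun z hz => (hu' z hz).continuousWithinAt
  have hucont : ContinuousOn u (Set.Ico 0 1) := fun z hz => (hu z hz).continuousWithinAt
  have h0pos : 0 < u' 0 := by rw [h0']; positivity
  have key : ∀ z ∈ Set.Ico (0:ℝ) 1, 0 < u' z := by
    by_contra h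
    push_neg at h
    obtain ⟨t, ht, htle⟩ := h
    set T := {z ∈ Set.Ico (0:ℝ) 1 | u' z ≤ 0} with hT
    have hTne : T.Nonempty := ⟨t, ht, htle⟩
    have hTbdd : BddBelow T := ⟨0, fun z hz => hz.1.1⟩
    set z₀ := sInf T with hz₀def
    have hz₀mem : z₀ ∈ Set.Ico (0:ℝ) 1 :=
      ⟨le_csInf hTne (fun z hz => hz.1.1),
        lt_of_le_of_lt (csInf_le hTbdd ⟨ht, htle⟩) ht.2⟩
    have hz₀cl : z₀ ∈ closure T := csInf_mem_closure hTne hTbdd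
    have hnb : (𝓝[T] z₀).NeBot := mem_closure_iff_nhdsWithin_neBot.mp hz₀cl
    have hle : u' z₀ ≤ 0 := by
      have htend : Filter.Tendsto u' (𝓝[T] z₀) (𝓝 (u' z₀)) :=
        (hu'cont z₀ hz₀mem).mono (fun z hz => hz.1)
      exact le_of_tendsto htend (eventually_nhdsWithin_of_forall fun z hz => hz.2)
    have hpos : ∀ z ∈ Set.Ico (0:ℝ) 1, z < z₀ → 0 < u' z := by
      intro z hz hlt
      by_contra hle'
      push_neg at hle'
      exact absurd (csInf_le hTbdd ⟨hz, hle'⟩) (not_le.2 hlt)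
    have hz₀pos : 0 < z₀ :=
      (hz₀mem.1).lt_of_ne (by intro h; rw [← h] at hle; exact absurd hle (not_le.2 h0pos))
    have hsub : Set.Icc (0:ℝ) z₀ ⊆ Set.Ico 0 1 :=
      fun x hx => ⟨hx.1, lt_of_le_of_lt hx.2 hz₀mem.2⟩
    have hz₀eq : u' z₀ = 0 := by
      rcases hle.lt_or_eq with hlt | heq
      · obtain ⟨z₁, hz₁mem, hz₁⟩ :=
          intermediate_value_Icc' hz₀pos.le (hu'cont.mono hsub) ⟨hlt.le, h0pos.le⟩
        have hz₁lt : z₁ < z₀ :=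
          lt_of_le_of_ne hz₁mem.2 (fun h => by rw [h] at hz₁; rw [hz₁] at hlt; exact lt_irrefl _ hlt)
        exact absurd hz₁ (hpos z₁ (hsub hz₁mem) hz₁lt).ne'
      · exact heq
    have hmonoIcc : StrictMonoOn u (Set.Icc 0 z₀) := by
      apply strictMonoOn_of_deriv_pos (convex_Icc _ _) (hucont.mono hsub)
      intro x hx
      rw [interior_Icc] at hx
      have hxIco : x ∈ Set.Ico (0:ℝ) 1 := ⟨hx.1.le, hx.2.trans hz₀mem.2⟩
      rw [((hu x hxIco).hasDerivAt (Ico_mem_nhds hx.1 hxIco.2)).deriv]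
      exact hpos x hxIco hx.2
    have hupos : 0 < u z₀ := by
      have := hmonoIcc ⟨le_rfl, hz₀pos.le⟩ ⟨hz₀pos.le, le_rfl⟩ hz₀pos
      rw [h0] at this; linarith
    have hode0 := hode z₀ hz₀mem
    rw [hz₀eq] at hode0
    have hz1pos : 0 < z₀ * (1 - z₀) := mul_pos hz₀pos (by linarith [hz₀mem.2])
    have hu''pos : 0 < u'' z₀ := by nlinarith [mul_pos (mul_pos ha hb) hupos]
    have hderiv : HasDerivWithinAt u' (u'' z₀) (Set.Ioo 0 z₀) z₀ :=
      (hu' z₀ hz₀mem).mono (fun x hx => ⟨hx.1.le, hx.2.trans hz₀mem.2⟩)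
    have hslope := hasDerivWithinAt_iff_tendsto_slope.mp hderiv
    have hz₀notin : z₀ ∉ Set.Ioo (0:ℝ) z₀ := fun h => lt_irrefl _ h.2
    rw [Set.diff_singleton_eq_self hz₀notin] at hslope
    have hnb2 : (𝓝[Set.Ioo (0:ℝ) z₀] z₀).NeBot := by
      apply mem_closure_iff_nhdsWithin_neBot.mp
      rw [closure_Ioo hz₀pos.ne]
      exact ⟨hz₀pos.le, le_rfl⟩
    have hev : ∀ᶠ z in 𝓝[Set.Ioo (0:ℝ) z₀] z₀, 0 < slope u' z₀ z :=
      hslope.eventually (eventually_gt_nhds hu''pos)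
    obtain ⟨z, h1, h2⟩ := (hev.and eventually_mem_nhdsWithin).exists
    have hzlt : z < z₀ := h2.2
    have hslopez : 0 < u' z / (z - z₀) := by
      rw [slope_def_field, hz₀eq, sub_zero] at h1
      exact h1
    have : u' z < 0 := by
      rcases div_pos_iff.mp hslopez with ⟨_, h⟩ | ⟨h, _⟩
      · linarith
      · exact h
    exact absurd this (not_lt.2 (hpos z ⟨h2.1.le, h2.2.trans hz₀mem.2⟩ hzlt).le)
  have hmono : StrictMonoOn u (Set.Ico 0 1) := by
    apply strictMonoOn_of_deriv_pos (convex_Ico _ _) hucont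
    intro x hx
    rw [interior_Ico] at hx
    have hxI : x ∈ Set.Ico (0:ℝ) 1 := ⟨hx.1.le, hx.2⟩
    rw [((hu x hxI).hasDerivAt (Ico_mem_nhds hx.1 hx.2)).deriv]
    exact key x hxI
  refine ⟨hmono.mono (fun z hz => ⟨hz.1.le, hz.2⟩), ?_⟩
  intro z hz
  rcases hz.1.lt_or_eq with h | h
  · have := hmono ⟨le_rfl, one_pos⟩ hz h
    rw [h0] at this; linarith
  · rw [← h, h0]; norm_num
end

section
/- Let a, b, c ∈ ℝ with a > 0, b > 0, c > 0, and let w : (-∞, 0] → ℝ be a C² solution of z(1-z)w''(z) + (c - (a+b+1)z)w'(z) - ab·w(z) = 0 with w(0) = 1 and w(z) > 0 for all z ≤ 0. Then w'(z) > 0 for all z < 0. -/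
open Topology Filter


theorem euler_hypergeometric_deriv_pos (a b c : ℝ)
    (ha : 0 < a) (hb : 0 < b) (hc : 0 < c)
    (w w' w'' : ℝ → ℝ)
    (hw : ∀ z ∈ Set.Iic (0:ℝ), HasDerivWithinAt w (w' z) (Set.Iic 0) z)
    (hw' : ∀ z ∈ Set.Iic (0:ℝ), HasDerivWithinAt w' (w'' z) (Set.Iic 0) z)
    (hw'' : ContinuousOn w'' (Set.Iic 0))
    (hode : ∀ z ∈ Set.Iic (0:ℝ),
      z*(1-z)*w'' z + (c - (a+b+1)*z)*w' z - a*b*w z = 0)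
    (h0 : w 0 = 1) (hpos : ∀ z ∈ Set.Iic (0:ℝ), 0 < w z) :
    ∀ z < (0:ℝ), 0 < w' z := by
  -- w' is continuous on Iic 0
  have hcont : ContinuousOn w' (Set.Iic 0) := fun z hz =>
    (hw' z hz).continuousWithinAt
  -- w'(0) = a*b/c > 0
  have hode0 := hode 0 Set.self_mem_Iic
  have hw'0 : 0 < w' 0 := by
    have : c * w' 0 = a * b := by rw [h0] at hode0; nlinarith
    nlinarith
  intro z₁ hz₁
  by_contra hcon
  push_neg at hcon
  -- the set of points in [z₁, 0] where w' ≤ 0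
  set S : Set ℝ := Set.Icc z₁ 0 ∩ w' ⁻¹' Set.Iic 0 with hS
  have hSne : S.Nonempty := ⟨z₁, ⟨le_refl _, le_of_lt hz₁⟩, hcon⟩
  have hSclosed : IsClosed S := by
    apply (hcont.mono (Set.Icc_subset_Iic_self)).preimage_isClosed_of_isClosed
      isClosed_Icc isClosed_Iic
  have hSbdd : BddAbove S := ⟨0, fun x hx => hx.1.2⟩
  set z₀ := sSup S with hz₀
  have hz₀S : z₀ ∈ S :=
    (isCompact_Icc.of_isClosed_subset hSclosed Set.inter_subset_left).sSup_mem hSne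
  have hz₀le : z₀ ≤ 0 := hz₀S.1.2
  have hz₀ne : z₀ ≠ 0 := by
    intro h
    have h2 : w' z₀ ≤ 0 := hz₀S.2
    rw [h] at h2
    linarith [h2]
  have hz₀lt : z₀ < 0 := lt_of_le_of_ne hz₀le hz₀ne
  -- on (z₀, 0], w' > 0
  have hright : ∀ x ∈ Set.Ioc z₀ 0, 0 < w' x := by
    intro x hx
    by_contra hx'
    push_neg at hx'
    have hxS : x ∈ S := ⟨⟨le_trans hz₀S.1.1 (le_of_lt hx.1), hx.2⟩, hx'⟩
    exact absurd (le_csSup hSbdd hxS) (not_le.mpr hx.1)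
  have hNe : (𝓝[Set.Ioc z₀ 0] z₀).NeBot := left_nhdsWithin_Ioc_neBot hz₀lt
  -- w'(z₀) = 0
  have hle : (𝓝[Set.Ioc z₀ 0] z₀) ≤ 𝓝[Set.Iic 0] z₀ :=
    nhdsWithin_mono _ Set.Ioc_subset_Iic_self
  have hw'z₀0 : w' z₀ = 0 := by
    have hge : 0 ≤ w' z₀ := by
      apply ge_of_tendsto (((hcont z₀ (Set.mem_Iic.mpr hz₀le)).mono_left hle))
      filter_upwards [self_mem_nhdsWithin] with x hx
      exact (hright x hx).le
    exact le_antisymm hz₀S.2 hge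
  -- w''(z₀) ≥ 0 from right difference quotients
  have hslope : Filter.Tendsto (slope w' z₀) (𝓝[Set.Ioc z₀ 0] z₀) (𝓝 (w'' z₀)) := by
    have := (hasDerivWithinAt_iff_tendsto_slope.mp (hw' z₀ (Set.mem_Iic.mpr hz₀le)))
    apply this.mono_left (nhdsWithin_mono _ ?_)
    intro x hx
    exact ⟨hx.2, ne_of_gt hx.1⟩
  have hw''ge : 0 ≤ w'' z₀ := by
    apply ge_of_tendsto hslope
    filter_upwards [self_mem_nhdsWithin] with x hx
    rw [slope_def_field, hw'z₀0]
    have hd : 0 < x - z₀ := sub_pos.mpr hx.1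
    have hx' : 0 ≤ w' x := (hright x hx).le
    apply div_nonneg (by linarith) hd.le
  -- contradiction via the ODE at z₀
  have hodez := hode z₀ (Set.mem_Iic.mpr hz₀le)
  rw [hw'z₀0] at hodez
  have hwpos := hpos z₀ (Set.mem_Iic.mpr hz₀le)
  nlinarith [mul_nonneg hw''ge (by linarith : (0:ℝ) ≤ 1 - z₀),
    mul_pos (mul_pos ha hb) hwpos]
end

section
/- Let μ, ν ∈ ℝ and let w be a C² function on a neighborhood of (-∞, 0] with w(0) = 1, and define G(z) = z^ν (1+z)^μ w(-z) for z > 0. If w satisfies Euler's hypergeometric equation z(1-z)w''+(c-(a+b+1)z)w'-ab·w = 0 with a = λ+μ+ν+2, b = μ+ν-λ, c = 2ν+3/2, then G satisfies (4/3)·G''(z)·z(z+1) + 2G'(z)(2z+1) - G(z)·(2m·z/(z+1) + 2n·(z+1)/z + 2(l+λ-m-n)) = 0 for all z > 0, where l = λ(2λ+1)/3, m = μ(2μ+1)/3, n = ν(2ν+1)/3. -/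
set_option maxHeartbeats 1600000 in
theorem G_satisfies_Gdiff (lam mu nu : ℝ)
    (w w' w'' : ℝ → ℝ)
    (hw : ∀ z : ℝ, z ≤ 0 → HasDerivAt w (w' z) z)
    (hw' : ∀ z : ℝ, z ≤ 0 → HasDerivAt w' (w'' z) z)
    (h0 : w 0 = 1)
    (hode : ∀ z : ℝ, z ≤ 0 →
      z*(1-z)*w'' z
        + ((2*nu+3/2) - ((lam+mu+nu+2) + (mu+nu-lam) + 1)*z)*w' z
        - (lam+mu+nu+2)*(mu+nu-lam)*w z = 0) :
    ∀ z : ℝ, 0 < z →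
      (4/3) * deriv (deriv (fun y : ℝ => y ^ nu * (1+y) ^ mu * w (-y))) z * (z*(z+1))
        + 2 * deriv (fun y : ℝ => y ^ nu * (1+y) ^ mu * w (-y)) z * (2*z+1)
        - (z ^ nu * (1+z) ^ mu * w (-z)) *
            (2*(mu*(2*mu+1)/3)*z/(z+1) + 2*(nu*(2*nu+1)/3)*(z+1)/z
              + 2*((lam*(2*lam+1)/3) + lam - (mu*(2*mu+1)/3) - (nu*(2*nu+1)/3))) = 0 := by
  intro z hz
  set F1 : ℝ → ℝ := fun y => nu * y ^ (nu-1) * (1+y) ^ mu * w (-y)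
      + mu * y ^ nu * (1+y) ^ (mu-1) * w (-y) - y ^ nu * (1+y) ^ mu * w' (-y) with hF1def
  -- basic HasDerivAt lemmas at a point y > 0
  have h1 : ∀ y : ℝ, 0 < y → ∀ p : ℝ, HasDerivAt (fun x : ℝ => x ^ p) (p * y ^ (p-1)) y :=
    fun y hy p => Real.hasDerivAt_rpow_const (Or.inl hy.ne')
  have h2 : ∀ y : ℝ, 0 < y → ∀ p : ℝ, HasDerivAt (fun x : ℝ => (1+x) ^ p) (p * (1+y) ^ (p-1)) y := by
    intro y hy p
    have hi : HasDerivAt (fun x : ℝ => 1 + x) 1 y := by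
      simpa using (hasDerivAt_id y).const_add (1:ℝ)
    have := (Real.hasDerivAt_rpow_const (x := 1+y) (p := p) (Or.inl (by positivity))).comp y hi
    simpa [Function.comp_def] using this
  have h3 : ∀ y : ℝ, 0 < y → HasDerivAt (fun x : ℝ => w (-x)) (-w' (-y)) y := by
    intro y hy
    have := (hw (-y) (by linarith)).comp y (hasDerivAt_neg y)
    simpa [Function.comp_def] using this
  have h3' : ∀ y : ℝ, 0 < y → HasDerivAt (fun x : ℝ => w' (-x)) (-w'' (-y)) y := by
    intro y hy
    have := (hw' (-y) (by linarith)).comp y (hasDerivAt_neg y)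
    simpa [Function.comp_def] using this
  -- first derivative of G on Ioi 0
  have hG : ∀ y ∈ Set.Ioi (0:ℝ),
      deriv (fun y : ℝ => y ^ nu * (1+y) ^ mu * w (-y)) y = F1 y := by
    intro y hy
    have hy' : (0:ℝ) < y := hy
    have hd : HasDerivAt (fun y : ℝ => y ^ nu * (1+y) ^ mu * w (-y))
        ((nu * y ^ (nu-1) * (1+y) ^ mu + y ^ nu * (mu * (1+y) ^ (mu-1))) * w (-y)
          + y ^ nu * (1+y) ^ mu * (-w' (-y))) y :=
      ((h1 y hy' nu).mul (h2 y hy' mu)).mul (h3 y hy')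
    rw [hd.deriv, hF1def]; ring
  have hEqEv : deriv (fun y : ℝ => y ^ nu * (1+y) ^ mu * w (-y)) =ᶠ[nhds z] F1 :=
    Filter.eventuallyEq_of_mem (Ioi_mem_nhds hz) hG
  have hd2 : deriv (deriv (fun y : ℝ => y ^ nu * (1+y) ^ mu * w (-y))) z = deriv F1 z :=
    hEqEv.deriv_eq
  -- derivative of F1 at z
  have hF1' : HasDerivAt F1
      ( ((nu * ((nu-1) * z ^ (nu-1-1)) * (1+z) ^ mu
            + nu * z ^ (nu-1) * (mu * (1+z) ^ (mu-1))) * w (-z)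
          + nu * z ^ (nu-1) * (1+z) ^ mu * (-w' (-z)))
        + ((mu * (nu * z ^ (nu-1)) * (1+z) ^ (mu-1)
            + mu * z ^ nu * ((mu-1) * (1+z) ^ (mu-1-1))) * w (-z)
          + mu * z ^ nu * (1+z) ^ (mu-1) * (-w' (-z)))
        - ((nu * z ^ (nu-1) * (1+z) ^ mu + z ^ nu * (mu * (1+z) ^ (mu-1))) * w' (-z)
          + z ^ nu * (1+z) ^ mu * (-w'' (-z))) ) z := by
    have t1 := (((h1 z hz (nu-1)).const_mul nu).mul (h2 z hz mu)).mul (h3 z hz)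
    have t2 := (((h1 z hz nu).const_mul mu).mul (h2 z hz (mu-1))).mul (h3 z hz)
    have t3 := ((h1 z hz nu).mul (h2 z hz mu)).mul (h3' z hz)
    exact (t1.add t2).sub t3
  rw [hd2, hF1'.deriv, hG z hz, hF1def]
  beta_reduce
  -- rewrite rpow powers
  have hz1 : (0:ℝ) < 1 + z := by linarith
  have e1 : z ^ (nu-1) = z ^ nu / z := by
    rw [show nu - 1 = nu - 1 from rfl, Real.rpow_sub hz, Real.rpow_one]
  have e2 : z ^ (nu-1-1) = z ^ nu / (z*z) := by
    rw [Real.rpow_sub hz, Real.rpow_sub hz, Real.rpow_one, div_div]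
  have e3 : (1+z) ^ (mu-1) = (1+z) ^ mu / (1+z) := by
    rw [Real.rpow_sub hz1, Real.rpow_one]
  have e4 : (1+z) ^ (mu-1-1) = (1+z) ^ mu / ((1+z)*(1+z)) := by
    rw [Real.rpow_sub hz1, Real.rpow_sub hz1, Real.rpow_one, div_div]
  rw [e2, e4, e1, e3]
  -- use the ODE to eliminate w'' (-z)
  have E := hode (-z) (by linarith)
  have hw2 : w'' (-z) = (((2*nu+3/2) + ((lam+mu+nu+2) + (mu+nu-lam) + 1)*z) * w' (-z)
      - (lam+mu+nu+2)*(mu+nu-lam) * w (-z)) / (z*(z+1)) := by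
    rw [eq_div_iff (by positivity)]
    linear_combination -E
  rw [hw2]
  obtain ⟨A, hA⟩ : ∃ A, z ^ nu = A := ⟨_, rfl⟩
  obtain ⟨B, hB⟩ : ∃ B, (1+z) ^ mu = B := ⟨_, rfl⟩
  rw [hA, hB]
  field_simp
  ring
end
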